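/- For all integers m, n ≥ 1: u_m·V_n + v_m·U_n = 2·U_{m+n}, where scalar multiplication of quaternions by real numbers u_m, v_m is used. -/
import Mathlib


open Quaternion

theorem stmt15 (p q : ℝ) (u : ℕ → ℝ) (hu : ∀ n, u (n + 2) = p * u (n + 1) + q * u n)
    (hu0 : u 0 = 0) (hu1 : u 1 = 1)
    (U : ℕ → ℍ[ℝ]) (hU : ∀ n, U n = ⟨u n, u (n + 1), u (n + 2), u (n + 3)⟩)
    (v : ℕ → ℝ) (hv : ∀ n, v (n + 2) = p * v (n + 1) + q * v n)
    (hv0 : v 0 = 2) (hv1 : v 1 = p)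
    (V : ℕ → ℍ[ℝ]) (hV : ∀ n, V n = ⟨v n, v (n + 1), v (n + 2), v (n + 3)⟩)
    (m n : ℕ) (hm : 1 ≤ m) (hn : 1 ≤ n) :
    u m • V n + v m • U n = (2 : ℝ) • U (m + n) := by
  have hvu : ∀ k, v k = 2 * u (k + 1) - p * u k := by
    intro k
    induction k using Nat.twoStepInduction with
    | zero => simp [hv0, hu1, hu0]
    | one =>
      have h2 := hu 0
      rw [hv1, h2, hu0, hu1]; ring
    | more k ih1 ih2 =>
      have h1 := hu k
      have h2 := hu (k + 1)
      rw [hv k, h2, ih1, ih2, h1]; ring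
  have key : ∀ j, u m * v j + v m * u j = 2 * u (m + j) := by
    intro j
    induction j using Nat.twoStepInduction with
    | zero => simp [hv0, hu0, hvu m]; ring
    | one =>
      rw [hv1, hu1, hvu m]; ring
    | more j ih1 ih2 =>
      rw [hv j, hu j, show m + (j + 2) = (m + j) + 2 by ring, hu (m + j),
        show (m + j) + 1 = m + (j + 1) by ring]
      linear_combination p * ih2 + q * ih1
  rw [hU n, hV n, hU (m + n)]
  ext <;> simp [Quaternion.ext_iff] <;>
    [skip; rw [show m + n + 1 = m + (n + 1) by ring];
     rw [show m + n + 2 = m + (n + 2) by ring];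
     rw [show m + n + 3 = m + (n + 3) by ring]] <;>
    [exact key n; exact key (n+1); exact key (n+2); exact key (n+3)]
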